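/- arXiv:0903.0454 — 2 statements merged into one kernel-verified Lean document; each statement's English description precedes it below -/
import Mathlib

section
/- Let B be an alternating symmetric bilinear form over 𝔽₂ and d₁,…,d_g, e₁,…,e_g vectors with B(d_i, d_j) = 0 and B(e_i, e_j) = 0 for all i, j, and B(d₁, e₁) = 1. Let γ = d₁ + e₁ and d'_i = T_γ(d_i) = d_i + B(γ, d_i)γ. Then: (a) B(d'_1, e_j) = 0 for all j; (b) B(d'_i, e₁) = 0 for all i; (c) for i, j ≥ 2, B(d'_i, e_j) = B(d_i, e_j) + B(d_i, e₁)·B(d₁, e_j). -/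
/-- Full mod-2 homology statement of Lemma 4.5: after the twist along
γ = d₁ + e₁, all pairings involving d₁ or e₁ vanish and the remaining pairings
change by B(d_i,e₁)·B(d₁,e_j). (Index 0 plays the role of the subscript 1.) -/
theorem stmt_11 {V : Type*} [AddCommGroup V] [Module (ZMod 2) V]
    (B : V →ₗ[ZMod 2] V →ₗ[ZMod 2] ZMod 2)
    (hsymm : ∀ x y : V, B x y = B y x)
    (halt : ∀ v : V, B v v = 0)
    (g : ℕ) (d e : Fin (g + 1) → V)
    (hd : ∀ i j, B (d i) (d j) = 0)
    (he : ∀ i j, B (e i) (e j) = 0)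
    (h1 : B (d 0) (e 0) = 1)
    (γ : V) (hγ : γ = d 0 + e 0)
    (d' : Fin (g + 1) → V) (hd' : ∀ i, d' i = d i + B γ (d i) • γ) :
    (∀ j, B (d' 0) (e j) = 0) ∧
    (∀ i, B (d' i) (e 0) = 0) ∧
    (∀ i j, i ≠ 0 → j ≠ 0 →
      B (d' i) (e j) = B (d i) (e j) + B (d i) (e 0) * B (d 0) (e j)) := by
  have key : ∀ i j, B (d' i) (e j)
      = B (d i) (e j) + B (d i) (e 0) * B (d 0) (e j) := by
    intro i j
    rw [hd' i, hγ]
    simp only [map_add, LinearMap.add_apply, map_smul, LinearMap.smul_apply,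
      smul_eq_mul, hd, he, hsymm (e 0) (d i)]
    ring_nf
  refine ⟨fun j => ?_, fun i => ?_, fun i j _ _ => key i j⟩
  · rw [key, h1, one_mul]
    exact CharTwo.add_self_eq_zero _
  · rw [key, h1, mul_one]
    exact CharTwo.add_self_eq_zero _
end

section
/- Let M be a nonzero g×g matrix over 𝔽₂. Then there exists a sequence of at most g 'pivot operations' (choose (i,j) with M_{ij}=1, replace M by M' where M'_{ik}=0 for all k, M'_{kj}=0 for all k, and M'_{kl} = M_{kl} + M_{kj}M_{il} for k≠i, l≠j) transforming M into the zero matrix. -/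
/-- A Gaussian pivot operation on a square matrix over 𝔽₂: pivot at an entry
equal to 1, zeroing its row and column and updating the rest. -/
def PivotStep {g : ℕ} (M N : Matrix (Fin g) (Fin g) (ZMod 2)) : Prop :=
  ∃ i j, M i j = 1 ∧ (∀ k, N i k = 0) ∧ (∀ k, N k j = 0) ∧
    ∀ k l, k ≠ i → l ≠ j → N k l = M k l + M k j * M i l

open Classical in
private lemma pivot_aux (g : ℕ) : ∀ c : ℕ, ∀ M : Matrix (Fin g) (Fin g) (ZMod 2),
    (Finset.univ.filter fun i => ∃ j, M i j ≠ 0).card ≤ c →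
    ∃ n ≤ c, ∃ seq : ℕ → Matrix (Fin g) (Fin g) (ZMod 2),
      seq 0 = M ∧ (∀ k < n, PivotStep (seq k) (seq (k + 1))) ∧ seq n = 0 := by
  intro c
  induction c with
  | zero =>
    intro M hc
    have hM : M = 0 := by
      funext i j
      by_contra h
      have hi : i ∈ Finset.univ.filter fun i => ∃ j, M i j ≠ 0 := by
        simp only [Finset.mem_filter, Finset.mem_univ, true_and]
        exact ⟨j, h⟩
      have := Finset.card_pos.mpr ⟨i, hi⟩
      omega
    exact ⟨0, le_rfl, fun _ => M, rfl, by omega, hM⟩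
  | succ c ih =>
    intro M hc
    by_cases h0 : M = 0
    · exact ⟨0, Nat.zero_le _, fun _ => M, rfl, by omega, h0⟩
    · -- pick a nonzero entry
      have : ∃ i j, M i j ≠ 0 := by
        by_contra h
        push_neg at h
        exact h0 (by funext i j; exact h i j)
      obtain ⟨i, j, hij⟩ := this
      have hone : M i j = 1 := by
        have : ∀ a : ZMod 2, a ≠ 0 → a = 1 := by decide
        exact this _ hij
      set N : Matrix (Fin g) (Fin g) (ZMod 2) :=
        fun k l => M k l + M k j * M i l with hN
      have hrow : ∀ k, N i k = 0 := by
        intro k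
        have : ∀ a : ZMod 2, a + 1 * a = 0 := by decide
        simp only [hN, hone]
        exact this _
      have hcol : ∀ k, N k j = 0 := by
        intro k
        have : ∀ a : ZMod 2, a + a * 1 = 0 := by decide
        simp only [hN, hone]
        exact this _
      have hpiv : PivotStep M N := ⟨i, j, hone, hrow, hcol, fun _ _ _ _ => rfl⟩
      -- nonzero rows of N form a subset of nonzero rows of M minus i
      have hsub : (Finset.univ.filter fun k => ∃ l, N k l ≠ 0) ⊆
          (Finset.univ.filter fun k => ∃ l, M k l ≠ 0).erase i := by
        intro k hk
        simp only [Finset.mem_filter, Finset.mem_univ, true_and] at hk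
        obtain ⟨l, hl⟩ := hk
        have hki : k ≠ i := by
          intro h; exact hl (h ▸ hrow l)
        refine Finset.mem_erase.mpr ⟨hki, ?_⟩
        simp only [Finset.mem_filter, Finset.mem_univ, true_and]
        by_contra h
        push_neg at h
        apply hl
        simp only [hN, h l, h j, zero_mul, add_zero]
      have hiM : i ∈ Finset.univ.filter fun k => ∃ l, M k l ≠ 0 := by
        simp only [Finset.mem_filter, Finset.mem_univ, true_and]
        exact ⟨j, hij⟩
      have hcard : (Finset.univ.filter fun k => ∃ l, N k l ≠ 0).card ≤ c := by
        have h1 := Finset.card_le_card hsub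
        rw [Finset.card_erase_of_mem hiM] at h1
        omega
      obtain ⟨n, hn, seq', hs0, hsteps, hsend⟩ := ih N hcard
      refine ⟨n + 1, by omega, fun k => if k = 0 then M else seq' (k - 1), by simp, ?_, ?_⟩
      · intro k hk
        rcases Nat.eq_zero_or_pos k with h | h
        · subst h
          simpa [hs0] using hpiv
        · have h1 : ¬ (k = 0) := by omega
          have h2 : ¬ (k + 1 = 0) := by omega
          simp only [h1, h2, if_false]
          have heq : k - 1 + 1 = k + 1 - 1 := by omega
          have hk' : k - 1 < n := by omega
          have := hsteps (k - 1) hk'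
          rwa [heq] at this
      · simp only [Nat.succ_ne_zero, if_false, Nat.add_sub_cancel]
        exact hsend

/-- Combinatorial heart of Theorem 4.6: any nonzero g×g matrix over 𝔽₂ can be
reduced to the zero matrix by a sequence of at most g pivot operations. -/
theorem stmt_17 (g : ℕ) (M : Matrix (Fin g) (Fin g) (ZMod 2)) (hM : M ≠ 0) :
    ∃ n ≤ g, ∃ seq : ℕ → Matrix (Fin g) (Fin g) (ZMod 2),
      seq 0 = M ∧ (∀ k < n, PivotStep (seq k) (seq (k + 1))) ∧ seq n = 0 := by
  classical
  have hcard : (Finset.univ.filter fun i => ∃ j, M i j ≠ 0).card ≤ g := by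
    simpa using Finset.card_le_card (Finset.filter_subset _ (Finset.univ : Finset (Fin g)))
  exact pivot_aux g g M hcard
end
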